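/- Let A = Diag(A₁, A₂) ∈ ℝ^{(n₁+n₂)×(n₁+n₂)} be block diagonal and let u₁ ∈ ℝ^{n₁}, u₂ ∈ ℝ^{n₂} be nonzero, and set 𝐮₁=(u₁,0), 𝐮₂=(0,u₂). Suppose Re z_A(𝐮₁) = Re z_A(𝐮₂). Then for every nonzero w ∈ span(𝐮₁,𝐮₂), Im z_A(w) lies between Im z_A(𝐮₁) and Im z_A(𝐮₂), and Re z_A(w) = Re z_A(𝐮₁); i.e., z_A(span(𝐮₁,𝐮₂)\{0}) ⊆ [z_A(𝐮₁), z_A(𝐮₂)], the vertical segment joining the two points. -/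

import Mathlib

open Matrix
open scoped RealInnerProductSpace

noncomputable def mulVecE {ι : Type*} [Fintype ι] (A : Matrix ι ι ℝ)
    (x : EuclideanSpace ℝ ι) : EuclideanSpace ℝ ι := WithLp.toLp 2 (A.mulVec x)

open Classical in
noncomputable def ang {ι : Type*} [Fintype ι] (a b : EuclideanSpace ℝ ι) : ℝ :=
  if a = 0 ∨ b = 0 then 0 else Real.arccos (⟪a, b⟫ / (‖a‖ * ‖b‖))

noncomputable def zA {ι : Type*} [Fintype ι] (A : Matrix ι ι ℝ)
    (x : EuclideanSpace ℝ ι) : ℂ :=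
  ((‖mulVecE A x‖ / ‖x‖ : ℝ) : ℂ) * Complex.exp (Complex.I * (ang (mulVecE A x) x : ℝ))

noncomputable def SRG {ι : Type*} [Fintype ι] (A : Matrix ι ι ℝ) : Set ℂ :=
  {z | ∃ x : EuclideanSpace ℝ ι, x ≠ 0 ∧ (z = zA A x ∨ z = (starRingEnd ℂ) (zA A x))}

lemma zA_re' {ι : Type*} [Fintype ι] (A : Matrix ι ι ℝ) (x : EuclideanSpace ℝ ι) :
    (zA A x).re = (‖mulVecE A x‖ / ‖x‖) * Real.cos (ang (mulVecE A x) x) := by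
  rw [zA, mul_comm Complex.I]
  simp [Complex.mul_re, Complex.exp_ofReal_mul_I_re]

lemma zA_im' {ι : Type*} [Fintype ι] (A : Matrix ι ι ℝ) (x : EuclideanSpace ℝ ι) :
    (zA A x).im = (‖mulVecE A x‖ / ‖x‖) * Real.sin (ang (mulVecE A x) x) := by
  rw [zA, mul_comm Complex.I]
  simp [Complex.mul_im, Complex.exp_ofReal_mul_I_im]

lemma zA_re_eq {ι : Type*} [Fintype ι] (A : Matrix ι ι ℝ) (x : EuclideanSpace ℝ ι)
    (hx : x ≠ 0) : (zA A x).re = ⟪mulVecE A x, x⟫ / ‖x‖ ^ 2 := by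
  rw [zA_re', ang]
  by_cases h : mulVecE A x = 0
  · simp [h]
  · rw [if_neg (by tauto), Real.cos_arccos
      (neg_le_of_abs_le (abs_real_inner_div_norm_mul_norm_le_one _ _))
      (le_of_abs_le (abs_real_inner_div_norm_mul_norm_le_one _ _))]
    have hA : ‖mulVecE A x‖ ≠ 0 := norm_ne_zero_iff.mpr h
    have hX : ‖x‖ ≠ 0 := norm_ne_zero_iff.mpr hx
    field_simp

lemma zA_im_eq {ι : Type*} [Fintype ι] (A : Matrix ι ι ℝ) (x : EuclideanSpace ℝ ι)
    (hx : x ≠ 0) :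
    (zA A x).im = Real.sqrt (‖mulVecE A x‖ ^ 2 / ‖x‖ ^ 2 - (⟪mulVecE A x, x⟫ / ‖x‖ ^ 2) ^ 2) := by
  rw [zA_im', ang]
  by_cases h : mulVecE A x = 0
  · simp [h]
  · rw [if_neg (by tauto), Real.sin_arccos]
    have hA : (0:ℝ) < ‖mulVecE A x‖ := norm_pos_iff.mpr h
    have hX : (0:ℝ) < ‖x‖ := norm_pos_iff.mpr hx
    rw [show ‖mulVecE A x‖ / ‖x‖ = Real.sqrt ((‖mulVecE A x‖ / ‖x‖)^2) by
      rw [Real.sqrt_sq (by positivity)]]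
    rw [← Real.sqrt_mul (by positivity)]
    congr 1
    field_simp

def elim2 {n₁ n₂ : ℕ} (x₁ : EuclideanSpace ℝ (Fin n₁)) (x₂ : EuclideanSpace ℝ (Fin n₂)) :
    EuclideanSpace ℝ (Fin n₁ ⊕ Fin n₂) := WithLp.toLp 2 (Sum.elim x₁ x₂)

lemma inner_elim {n₁ n₂ : ℕ} (x₁ y₁ : EuclideanSpace ℝ (Fin n₁)) (x₂ y₂ : EuclideanSpace ℝ (Fin n₂)) :
    ⟪elim2 x₁ x₂, elim2 y₁ y₂⟫ = ⟪x₁, y₁⟫ + ⟪x₂, y₂⟫ := by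
  simp [PiLp.inner_apply, elim2, Fintype.sum_sum_type]

lemma elim_smul_add {n₁ n₂ : ℕ} (a b : ℝ) (x₁ : EuclideanSpace ℝ (Fin n₁)) (x₂ : EuclideanSpace ℝ (Fin n₂)) :
    a • elim2 x₁ 0 + b • elim2 0 x₂ = elim2 (a • x₁) (b • x₂) := by
  ext i
  cases i <;> simp [elim2]

lemma mulVec_elim {n₁ n₂ : ℕ} (A₁ : Matrix (Fin n₁) (Fin n₁) ℝ) (A₂ : Matrix (Fin n₂) (Fin n₂) ℝ)
    (x₁ : EuclideanSpace ℝ (Fin n₁)) (x₂ : EuclideanSpace ℝ (Fin n₂)) :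
    mulVecE (Matrix.fromBlocks A₁ 0 0 A₂) (elim2 x₁ x₂) = elim2 (mulVecE A₁ x₁) (mulVecE A₂ x₂) := by
  show WithLp.toLp 2 (Matrix.fromBlocks A₁ 0 0 A₂ *ᵥ (Sum.elim x₁ x₂)) = _
  rw [Matrix.fromBlocks_mulVec]
  ext i
  cases i <;> simp [elim2, mulVecE]

lemma mulVecE_smul {ι : Type*} [Fintype ι] (A : Matrix ι ι ℝ) (a : ℝ) (x : EuclideanSpace ℝ ι) :
    mulVecE A (a • x) = a • mulVecE A x := by
  show WithLp.toLp 2 (A *ᵥ (a • (x : ι → ℝ))) = a • WithLp.toLp 2 (A *ᵥ x)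
  rw [Matrix.mulVec_smul, WithLp.toLp_smul]

lemma mediant (α β p₁ p₂ n₁ n₂ : ℝ) (hα : 0 ≤ α) (hβ : 0 ≤ β) (hp₁ : 0 < p₁) (hp₂ : 0 < p₂)
    (hd : 0 < α * p₁ + β * p₂) :
    (α * n₁ + β * n₂) / (α * p₁ + β * p₂) ∈ Set.uIcc (n₁ / p₁) (n₂ / p₂) := by
  rw [Set.mem_uIcc]
  rcases le_total (n₁ * p₂) (n₂ * p₁) with h | h
  · left
    constructor
    · rw [div_le_div_iff₀ hp₁ hd]; nlinarith
    · rw [div_le_div_iff₀ hd hp₂]; nlinarith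
  · right
    constructor
    · rw [div_le_div_iff₀ hp₂ hd]; nlinarith
    · rw [div_le_div_iff₀ hd hp₁]; nlinarith

set_option maxHeartbeats 1000000 in
theorem stmt19 {n₁ n₂ : ℕ} (A₁ : Matrix (Fin n₁) (Fin n₁) ℝ) (A₂ : Matrix (Fin n₂) (Fin n₂) ℝ)
    (u₁ : EuclideanSpace ℝ (Fin n₁)) (u₂ : EuclideanSpace ℝ (Fin n₂))
    (h₁ : u₁ ≠ 0) (h₂ : u₂ ≠ 0) :
    let A : Matrix (Fin n₁ ⊕ Fin n₂) (Fin n₁ ⊕ Fin n₂) ℝ := Matrix.fromBlocks A₁ 0 0 A₂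
    let U₁ : EuclideanSpace ℝ (Fin n₁ ⊕ Fin n₂) := WithLp.toLp 2 (Sum.elim u₁ 0)
    let U₂ : EuclideanSpace ℝ (Fin n₁ ⊕ Fin n₂) := WithLp.toLp 2 (Sum.elim 0 u₂)
    (zA A U₁).re = (zA A U₂).re →
    ∀ w : EuclideanSpace ℝ (Fin n₁ ⊕ Fin n₂),
      w ∈ Submodule.span ℝ ({U₁, U₂} : Set (EuclideanSpace ℝ (Fin n₁ ⊕ Fin n₂))) →
      w ≠ 0 →
      (zA A w).re = (zA A U₁).re ∧
      (zA A w).im ∈ Set.uIcc (zA A U₁).im (zA A U₂).im := by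
  intro A U₁ U₂ hre w hw hw0
  have hU₁ : U₁ = elim2 u₁ 0 := rfl
  have hU₂ : U₂ = elim2 0 u₂ := rfl
  obtain ⟨a, b, hab⟩ := Submodule.mem_span_pair.mp hw
  have hwe : w = elim2 (a • u₁) (b • u₂) := by
    rw [← hab, hU₁, hU₂, elim_smul_add]
  -- scalar quantities
  set v₁ := mulVecE A₁ u₁ with hv₁
  set v₂ := mulVecE A₂ u₂ with hv₂
  set c₁ := (⟪v₁, u₁⟫ : ℝ) with hc₁
  set c₂ := (⟪v₂, u₂⟫ : ℝ) with hc₂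
  have hp₁ : (0:ℝ) < ‖u₁‖ ^ 2 := pow_pos (norm_pos_iff.mpr h₁) 2
  have hp₂ : (0:ℝ) < ‖u₂‖ ^ 2 := pow_pos (norm_pos_iff.mpr h₂) 2
  -- images under A
  have hz : mulVecE A₂ (0 : EuclideanSpace ℝ (Fin n₂)) = 0 := by
    show WithLp.toLp 2 (A₂ *ᵥ 0) = 0; simp
  have hz' : mulVecE A₁ (0 : EuclideanSpace ℝ (Fin n₁)) = 0 := by
    show WithLp.toLp 2 (A₁ *ᵥ 0) = 0; simp
  have hAU₁ : mulVecE A U₁ = elim2 v₁ 0 := by rw [hU₁, mulVec_elim, hz]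
  have hAU₂ : mulVecE A U₂ = elim2 0 v₂ := by rw [hU₂, mulVec_elim, hz']
  have hAw : mulVecE A w = elim2 (a • v₁) (b • v₂) := by
    rw [hwe, mulVec_elim, mulVecE_smul, mulVecE_smul]
  -- norms squared via inner products
  have nsq : ∀ {k : ℕ} (x : EuclideanSpace ℝ (Fin k)), ‖x‖ ^ 2 = ⟪x, x⟫ :=
    fun x => (real_inner_self_eq_norm_sq x).symm
  have nsq' : ∀ (x : EuclideanSpace ℝ (Fin n₁ ⊕ Fin n₂)), ‖x‖ ^ 2 = ⟪x, x⟫ :=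
    fun x => (real_inner_self_eq_norm_sq x).symm
  have hnU₁ : ‖U₁‖ ^ 2 = ‖u₁‖ ^ 2 := by
    rw [nsq', hU₁, inner_elim, ← nsq, ← nsq]; simp
  have hnU₂ : ‖U₂‖ ^ 2 = ‖u₂‖ ^ 2 := by
    rw [nsq', hU₂, inner_elim, ← nsq, ← nsq]; simp
  have hnAU₁ : ‖mulVecE A U₁‖ ^ 2 = ‖v₁‖ ^ 2 := by
    rw [nsq', hAU₁, inner_elim, ← nsq, ← nsq]; simp
  have hnAU₂ : ‖mulVecE A U₂‖ ^ 2 = ‖v₂‖ ^ 2 := by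
    rw [nsq', hAU₂, inner_elim, ← nsq, ← nsq]; simp
  have hiU₁ : (⟪mulVecE A U₁, U₁⟫ : ℝ) = c₁ := by
    rw [hAU₁, hU₁, inner_elim]; simp [hc₁]
  have hiU₂ : (⟪mulVecE A U₂, U₂⟫ : ℝ) = c₂ := by
    rw [hAU₂, hU₂, inner_elim]; simp [hc₂]
  have hnw : ‖w‖ ^ 2 = a ^ 2 * ‖u₁‖ ^ 2 + b ^ 2 * ‖u₂‖ ^ 2 := by
    rw [nsq', hwe, inner_elim, real_inner_smul_left, real_inner_smul_right,
      real_inner_smul_left, real_inner_smul_right, ← nsq, ← nsq]; ring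
  have hnAw : ‖mulVecE A w‖ ^ 2 = a ^ 2 * ‖v₁‖ ^ 2 + b ^ 2 * ‖v₂‖ ^ 2 := by
    rw [nsq', hAw, inner_elim, real_inner_smul_left, real_inner_smul_right,
      real_inner_smul_left, real_inner_smul_right, ← nsq, ← nsq]; ring
  have hiw : (⟪mulVecE A w, w⟫ : ℝ) = a ^ 2 * c₁ + b ^ 2 * c₂ := by
    rw [hAw, hwe, inner_elim, real_inner_smul_left, real_inner_smul_right,
      real_inner_smul_left, real_inner_smul_right, hc₁, hc₂]; ring
  have hU₁0 : U₁ ≠ 0 := by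
    intro h
    rw [h, norm_zero] at hnU₁
    nlinarith
  have hU₂0 : U₂ ≠ 0 := by
    intro h
    rw [h, norm_zero] at hnU₂
    nlinarith
  have hwpos : (0:ℝ) < ‖w‖ ^ 2 := pow_pos (norm_pos_iff.mpr hw0) 2
  have hd : (0:ℝ) < a ^ 2 * ‖u₁‖ ^ 2 + b ^ 2 * ‖u₂‖ ^ 2 := hnw ▸ hwpos
  -- rewrite the z values
  have reU₁ : (zA A U₁).re = c₁ / ‖u₁‖ ^ 2 := by rw [zA_re_eq A U₁ hU₁0, hiU₁, hnU₁]
  have reU₂ : (zA A U₂).re = c₂ / ‖u₂‖ ^ 2 := by rw [zA_re_eq A U₂ hU₂0, hiU₂, hnU₂]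
  have rew : (zA A w).re = (a ^ 2 * c₁ + b ^ 2 * c₂) / (a ^ 2 * ‖u₁‖ ^ 2 + b ^ 2 * ‖u₂‖ ^ 2) := by
    rw [zA_re_eq A w hw0, hiw, hnw]
  have hrr : c₁ * ‖u₂‖ ^ 2 = c₂ * ‖u₁‖ ^ 2 := by
    rw [reU₁, reU₂, div_eq_div_iff hp₁.ne' hp₂.ne'] at hre
    linarith
  have hremain : (zA A w).re = (zA A U₁).re := by
    rw [rew, reU₁, div_eq_div_iff hd.ne' hp₁.ne']
    nlinarith
  refine ⟨hremain, ?_⟩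
  -- imaginary parts
  have imU₁ : (zA A U₁).im =
      Real.sqrt (‖v₁‖ ^ 2 / ‖u₁‖ ^ 2 - (c₁ / ‖u₁‖ ^ 2) ^ 2) := by
    rw [zA_im_eq A U₁ hU₁0, hiU₁, hnU₁, hnAU₁]
  have imU₂ : (zA A U₂).im =
      Real.sqrt (‖v₂‖ ^ 2 / ‖u₂‖ ^ 2 - (c₂ / ‖u₂‖ ^ 2) ^ 2) := by
    rw [zA_im_eq A U₂ hU₂0, hiU₂, hnU₂, hnAU₂]
  have imw : (zA A w).im =
      Real.sqrt ((a ^ 2 * ‖v₁‖ ^ 2 + b ^ 2 * ‖v₂‖ ^ 2) / (a ^ 2 * ‖u₁‖ ^ 2 + b ^ 2 * ‖u₂‖ ^ 2)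
        - ((a ^ 2 * c₁ + b ^ 2 * c₂) / (a ^ 2 * ‖u₁‖ ^ 2 + b ^ 2 * ‖u₂‖ ^ 2)) ^ 2) := by
    rw [zA_im_eq A w hw0, hiw, hnw, hnAw]
  -- the common real part r
  have hrw : (a ^ 2 * c₁ + b ^ 2 * c₂) / (a ^ 2 * ‖u₁‖ ^ 2 + b ^ 2 * ‖u₂‖ ^ 2) = c₁ / ‖u₁‖ ^ 2 := by
    rw [← rew, ← reU₁, hremain]
  have hr₂ : c₂ / ‖u₂‖ ^ 2 = c₁ / ‖u₁‖ ^ 2 := by rw [← reU₁, ← reU₂, hre]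
  have hmed := mediant (a ^ 2) (b ^ 2) (‖u₁‖ ^ 2) (‖u₂‖ ^ 2) (‖v₁‖ ^ 2) (‖v₂‖ ^ 2)
    (sq_nonneg a) (sq_nonneg b) hp₁ hp₂ hd
  rw [Set.mem_uIcc] at hmed ⊢
  rw [imU₁, imU₂, imw, hrw, hr₂]
  rcases hmed with ⟨hl, hr⟩ | ⟨hl, hr⟩
  · exact Or.inl ⟨Real.sqrt_le_sqrt (by linarith), Real.sqrt_le_sqrt (by linarith)⟩
  · exact Or.inr ⟨Real.sqrt_le_sqrt (by linarith), Real.sqrt_le_sqrt (by linarith)⟩
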